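/- Let L be a levellised n-lattice, m ≥ 1, and A_n,…,A_{n+m−1} ⊆ L \ {0} satisfying the conditions making L̃ = L_{A_n,…,A_{n+m−1}} a levellised lattice. If L is vertically decomposable, then L̃ is vertically decomposable. -/

import Mathlib

namespace PaperLattice

variable {N : ℕ}

/-- Depth: one less than the maximum length of a chain from `t` down to `a` w.r.t. `le`. -/
noncomputable def dep (le : Fin N → Fin N → Prop) (t a : Fin N) : ℕ :=
  sSup {k | ∃ l : List (Fin N), List.Chain' (fun x y => le y x ∧ y ≠ x) l ∧
    l.head? = some t ∧ l.getLast? = some a ∧ l.length = k + 1}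

/-- The `d`-th level: elements of depth `d`. -/
noncomputable def lev (le : Fin N → Fin N → Prop) (t : Fin N) (d : ℕ) : Set (Fin N) :=
  {a | dep le t a = d}

/-- A labelled poset is levellised if depth is monotone in the nonzero labels. -/
def Levellised (le : Fin N → Fin N → Prop) (t : Fin N) : Prop :=
  ∀ i j : Fin N, 0 < (i : ℕ) → (i : ℕ) ≤ (j : ℕ) → dep le t i ≤ dep le t j

def lt' (le : Fin N → Fin N → Prop) (a b : Fin N) : Prop := le a b ∧ a ≠ b

/-- `b` covers `a`. -/
def CovByRel (le : Fin N → Fin N → Prop) (a b : Fin N) : Prop :=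
  lt' le a b ∧ ∀ x, lt' le a x → lt' le x b → False

/-- The covering set of `a`. -/
def cov (le : Fin N → Fin N → Prop) (a : Fin N) : Set (Fin N) := {b | CovByRel le a b}

/-- The up-set of `A`. -/
def upset (le : Fin N → Fin N → Prop) (A : Set (Fin N)) : Set (Fin N) :=
  {x | ∃ a ∈ A, le a x}

def AntichainRel (le : Fin N → Fin N → Prop) (A : Set (Fin N)) : Prop :=
  ∀ a ∈ A, ∀ b ∈ A, a ≠ b → ¬ le a b

/-- Binary weight of a set of labels. -/
noncomputable def wt (A : Set (Fin N)) : ℕ :=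
  ∑ j : Fin N, A.indicator (fun j => 2 ^ (j : ℕ)) j

/-- `z` is a bottom and `o` a top for `le`. -/
def Bounds (le : Fin N → Fin N → Prop) (z o : Fin N) : Prop :=
  (∀ a, le z a) ∧ (∀ a, le a o)

/-- The order obtained from `le` by adding `m` new atoms, the `i`-th having covering set `A i`. -/
def extLe {n m : ℕ} (le : Fin n → Fin n → Prop) (A : Fin m → Set (Fin n)) :
    Fin (n + m) → Fin (n + m) → Prop := fun x y =>
  if hx : (x : ℕ) < n then
    if hy : (y : ℕ) < n then le ⟨x, hx⟩ ⟨y, hy⟩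
    else (x : ℕ) = 0
  else
    if hy : (y : ℕ) < n then
      (⟨y, hy⟩ : Fin n) ∈ upset le (A ⟨(x : ℕ) - n, by have := x.isLt; omega⟩)
    else x = y

/-- The relabelled order `π(L)`. -/
def permLe {n : ℕ} (π : Equiv.Perm (Fin n)) (le : Fin n → Fin n → Prop) :
    Fin n → Fin n → Prop := fun a b => le (π.symm a) (π.symm b)


/-- `A` is a lattice-antichain for `L` (with bottom `z`). -/
def IsLatticeAntichain {n : ℕ} (L : Lattice (Fin n)) (z : Fin n) (A : Set (Fin n)) : Prop :=
  A.Nonempty ∧ (∀ a ∈ A, a ≠ z) ∧ AntichainRel L.le A ∧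
    ∀ a ∈ upset L.le A, ∀ b ∈ upset L.le A,
      L.inf a b = z ∨ L.inf a b ∈ upset L.le A

/-- Vertical decomposability: some element other than the bottom `z` and top `o` is
comparable to every element. -/
def VertDecomp {N : ℕ} (le : Fin N → Fin N → Prop) (z o : Fin N) : Prop :=
  ∃ i : Fin N, i ≠ z ∧ i ≠ o ∧ ∀ j, le i j ∨ le j i

section helpers

variable {n : ℕ} (L : Lattice (Fin n))

lemma chainSet_le {t a : Fin n} {kk : ℕ}
    (h : kk ∈ {k | ∃ l : List (Fin n), List.Chain' (fun x y => L.le y x ∧ y ≠ x) l ∧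
      l.head? = some t ∧ l.getLast? = some a ∧ l.length = k + 1}) : kk + 1 ≤ n := by
  obtain ⟨l, hc, -, -, hlen⟩ := h
  have htr : Transitive (fun x y : Fin n => L.le y x ∧ y ≠ x) := by
    intro x y z ⟨h1, h2⟩ ⟨h3, h4⟩
    refine ⟨L.le_trans _ _ _ h3 h1, fun he => ?_⟩
    subst he
    exact h2 (L.le_antisymm _ _ h1 h3)
  letI : IsTrans (Fin n) (fun x y : Fin n => L.le y x ∧ y ≠ x) := ⟨fun _ _ _ h1 h2 => htr h1 h2⟩
  have hp : l.Pairwise (fun x y => L.le y x ∧ y ≠ x) := List.isChain_iff_pairwise.mp hc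
  have hnd : l.Nodup := hp.imp (fun h => h.2.symm)
  have := hnd.length_le_card
  simpa [hlen] using this

lemma chainSet_bdd (t a : Fin n) :
    BddAbove {k | ∃ l : List (Fin n), List.Chain' (fun x y => L.le y x ∧ y ≠ x) l ∧
      l.head? = some t ∧ l.getLast? = some a ∧ l.length = k + 1} :=
  ⟨n, fun _ hk => by have := chainSet_le L hk; omega⟩

lemma chainSet_nonempty (t a : Fin n) (ht : ∀ x, L.le x t) :
    Set.Nonempty {k | ∃ l : List (Fin n), List.Chain' (fun x y => L.le y x ∧ y ≠ x) l ∧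
      l.head? = some t ∧ l.getLast? = some a ∧ l.length = k + 1} := by
  by_cases h : a = t
  · exact ⟨0, [t], by simp [List.Chain'], by simp, by simp [h], by simp⟩
  · exact ⟨1, [t, a], by simp [List.Chain', List.isChain_cons_cons, ht a, h], by simp, by simp, by simp⟩

lemma dep_lt_of_lt {t a b : Fin n} (ht : ∀ x, L.le x t) (hle : L.le b a) (hne : b ≠ a) :
    dep L.le t a < dep L.le t b := by
  unfold dep
  have hmem := Nat.sSup_mem (chainSet_nonempty L t a ht) (chainSet_bdd L t a)
  obtain ⟨l, hc, hh, hl, hlen⟩ := hmem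
  have hlnil : l ≠ [] := by intro h; simp [h] at hlen
  have : (sSup {k | ∃ l : List (Fin n),
      List.Chain' (fun x y => L.le y x ∧ y ≠ x) l ∧
      l.head? = some t ∧ l.getLast? = some a ∧ l.length = k + 1} + 1) ∈ {k | ∃ l : List (Fin n),
      List.Chain' (fun x y => L.le y x ∧ y ≠ x) l ∧
      l.head? = some t ∧ l.getLast? = some b ∧ l.length = k + 1} := by
    refine ⟨l ++ [b], ?_, ?_, ?_, by simp [hlen, dep]⟩
    · show List.IsChain _ _
      rw [List.isChain_append]
      refine ⟨hc, by simp, ?_⟩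
      intro x hx y hy
      simp at hy
      rw [hl] at hx
      simp at hx
      subst hx; subst hy
      exact ⟨hle, hne⟩
    · rw [List.head?_append, hh]; rfl
    · exact List.getLast?_concat
  have := le_csSup (chainSet_bdd L t b) this
  exact lt_of_lt_of_le (Nat.lt_succ_self _) this

end helpers

/-- if `L` is vertically decomposable, so is its extension by new atoms. -/
theorem statement8 {n m : ℕ} (hn : 2 ≤ n) (hm : 1 ≤ m) (L : Lattice (Fin n))
    (hb : Bounds L.le ⟨0, by omega⟩ ⟨1, by omega⟩)
    (hlev : Levellised L.le ⟨1, by omega⟩)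
    (k : ℕ) (hk : dep L.le ⟨1, by omega⟩ ⟨n - 1, by omega⟩ = k)
    (A : Fin m → Set (Fin n))
    (hB1 : ∀ i : Fin m, (A i ∩ lev L.le ⟨1, by omega⟩ k).Nonempty)
    (hB2 : ∀ i : Fin m, IsLatticeAntichain L ⟨0, by omega⟩ (A i))
    (hB3 : ∀ i j : Fin m, i ≠ j → ∀ a b : Fin n,
      a ∈ upset L.le (A i) ∩ upset L.le (A j) →
      b ∈ upset L.le (A i) ∩ upset L.le (A j) →
      L.inf a b ≠ ⟨0, by omega⟩) :
    VertDecomp L.le ⟨0, by omega⟩ ⟨1, by omega⟩ →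
      VertDecomp (extLe L.le A) ⟨0, by omega⟩ ⟨1, by omega⟩ := by
  rintro ⟨i, hi0, hi1, hcomp⟩
  have hin : (i : ℕ) < n := i.isLt
  refine ⟨⟨(i : ℕ), by omega⟩, ?_, ?_, ?_⟩
  · simp only [ne_eq, Fin.mk.injEq]
    exact fun h => hi0 (Fin.ext h)
  · simp only [ne_eq, Fin.mk.injEq]
    exact fun h => hi1 (Fin.ext h)
  · -- key fact: every element of every A j at level k is below i
    have key : ∀ jj : Fin m, ∃ a ∈ A jj, L.le a i := by
      intro jj
      obtain ⟨a, haA, hak⟩ := hB1 jj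
      refine ⟨a, haA, ?_⟩
      rcases hcomp a with h | h
      · by_cases hia : i = a
        · exact hia ▸ L.le_refl i
        · exfalso
          -- i < a would force dep i ≥ k + 1, but dep i ≤ k
          have hlt := dep_lt_of_lt L (t := ⟨1, by omega⟩) hb.2 h hia
          have hdepa : dep L.le ⟨1, by omega⟩ a = k := hak
          have hipos : 0 < (i : ℕ) := by
            rcases Nat.eq_zero_or_pos (i : ℕ) with h0 | h0
            · exact absurd (Fin.ext h0) hi0
            · exact h0
          have hile : dep L.le ⟨1, by omega⟩ i ≤ dep L.le ⟨1, by omega⟩ ⟨n - 1, by omega⟩ :=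
            hlev i ⟨n - 1, by omega⟩ hipos (by simp; omega)
          rw [hk] at hile
          omega
      · exact h
    intro j
    by_cases hj : (j : ℕ) < n
    · rcases hcomp ⟨(j : ℕ), hj⟩ with h | h
      · left; simp only [extLe, hin, hj, dif_pos]; exact h
      · right; simp only [extLe, hin, hj, dif_pos]; exact h
    · right
      simp only [extLe, hj, hin, dif_neg, dif_pos, not_false_iff]
      obtain ⟨a, haA, hai⟩ := key ⟨(j : ℕ) - n, by have := j.isLt; omega⟩
      exact ⟨a, haA, hai⟩

end PaperLattice
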